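/- Let G be a group of nilpotency class at most 2 and let n be a natural number. Then the commutator of x and y in the group (G, ∘ₙ) equals ⁅x,y⁆^{2n+1}: for all x, y in G, ((x⁻¹ ∘ₙ y⁻¹) ∘ₙ x) ∘ₙ y = ⁅x,y⁆^{2n+1}. -/

import Mathlib

/-- The commutator `[x,y] = x⁻¹y⁻¹xy` as used in the paper. -/
def pcomm {G : Type*} [Group G] (x y : G) : G := x⁻¹ * y⁻¹ * x * y

/-- The operation `x ∘ₙ y := [x,y]^n x y` of the paper. -/
def opn {G : Type*} [Group G] (n : ℕ) (x y : G) : G := (pcomm x y) ^ n * x * y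

/-- In a group of nilpotency class at most 2, the `∘ₙ`-commutator of `x`
and `y` equals `[x,y]^(2n+1)`. -/
theorem stmt_3 {G : Type*} [Group G]
    (hG : ∀ x y z : G, pcomm (pcomm x y) z = 1) (n : ℕ) (x y : G) :
    opn n (opn n (opn n x⁻¹ y⁻¹) x) y = (pcomm x y) ^ (2 * n + 1) := by
  have key : ∀ p z : G, p⁻¹ * z⁻¹ * p * z = 1 → Commute p z := by
    intro p z h
    open scoped commutatorElement in
    have h2 : ⁅p⁻¹, z⁻¹⁆ = 1 := by
      rw [commutatorElement_def]
      simpa [mul_assoc] using h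
    have := commutatorElement_eq_one_iff_commute.mp h2
    simpa using this.inv_left.inv_right
  have hcomm : ∀ a b z : G, Commute (pcomm a b) z := by
    intro a b z
    exact key _ _ (hG a b z)
  have hc : ∀ z : G, Commute (pcomm x y) z := hcomm x y
  set c := pcomm x y with hcdef
  have conj : ∀ w : G, w * c * w⁻¹ = c := by
    intro w
    rw [← (hc w).eq, mul_assoc, mul_inv_cancel, mul_one]
  have conj' : ∀ w : G, w * c⁻¹ * w⁻¹ = c⁻¹ := by
    intro w
    rw [← ((hc w).inv_left).eq, mul_assoc, mul_inv_cancel, mul_one]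
  have hpow : ∀ z : G, Commute (c ^ n) z := fun z => (hc z).pow_left n
  have cancel : ∀ w v : G, pcomm (c ^ n * w) v = pcomm w v := by
    intro w v
    simp only [pcomm, mul_inv_rev]
    calc w⁻¹ * (c ^ n)⁻¹ * v⁻¹ * (c ^ n * w) * v
        = w⁻¹ * ((c ^ n)⁻¹ * v⁻¹ * c ^ n) * w * v := by group
      _ = w⁻¹ * ((c ^ n)⁻¹ * (c ^ n * v⁻¹)) * w * v := by rw [mul_assoc ((c^n)⁻¹), (hpow v⁻¹).eq]
      _ = w⁻¹ * v⁻¹ * w * v := by group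
  have h1 : pcomm x⁻¹ y⁻¹ = c := by
    have e : pcomm x⁻¹ y⁻¹ = (x * y) * c * (x * y)⁻¹ := by
      simp only [pcomm, hcdef]; group
    rw [e, conj]
  have hyx : pcomm y x = c⁻¹ := by simp only [pcomm, hcdef]; group
  have h2a : pcomm x y⁻¹ = c⁻¹ := by
    have e : pcomm x y⁻¹ = y * pcomm y x * y⁻¹ := by simp only [pcomm]; group
    rw [e, hyx, conj']
  have h2b : pcomm (x⁻¹ * y⁻¹) x = (pcomm x y⁻¹)⁻¹ := by simp only [pcomm]; group
  have h2 : pcomm (c ^ n * (x⁻¹ * y⁻¹)) x = c := by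
    rw [cancel, h2b, h2a, inv_inv]
  have h3 : pcomm (x⁻¹ * y⁻¹ * x) y = 1 := by
    have e : pcomm (x⁻¹ * y⁻¹ * x) y = pcomm x y⁻¹ * pcomm x y := by
      simp only [pcomm]; group
    rw [e, h2a, ← hcdef, inv_mul_cancel]
  have e1 : opn n x⁻¹ y⁻¹ = c ^ n * (x⁻¹ * y⁻¹) := by
    rw [opn, h1]; group
  have e2 : opn n (c ^ n * (x⁻¹ * y⁻¹)) x = c ^ n * (c ^ n * (x⁻¹ * y⁻¹ * x)) := by
    rw [opn, h2]; group
  have h4 : pcomm (c ^ n * (c ^ n * (x⁻¹ * y⁻¹ * x))) y = 1 := by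
    rw [cancel, cancel, h3]
  have e3 : opn n (c ^ n * (c ^ n * (x⁻¹ * y⁻¹ * x))) y
      = c ^ n * (c ^ n * (x⁻¹ * y⁻¹ * x)) * y := by
    rw [opn, h4, one_pow, one_mul]
  rw [e1, e2, e3, hcdef]
  have efin : pcomm x y ^ (2 * n + 1)
      = pcomm x y ^ n * (pcomm x y ^ n * pcomm x y) := by
    rw [← pow_succ, ← pow_add]
    ring_nf
  rw [efin]
  simp only [pcomm]
  group
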